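/- Let E be a real inner product space, let p, w, x, z ∈ E, and let y lie on the segment [x, z]. If dist(w, x) ≤ dist(p, x) and dist(w, z) ≤ dist(p, z), then dist(w, y) ≤ dist(p, y). (Equivalently: the intersection of the closed disks centered at x and z, each passing through p, is contained in the closed disk centered at y passing through p.) -/

import Mathlib

theorem stmt_0 {E : Type*} [NormedAddCommGroup E] [InnerProductSpace ℝ E]
    (p w x z y : E) (hy : y ∈ segment ℝ x z)
    (hx : dist w x ≤ dist p x) (hz : dist w z ≤ dist p z) :
    dist w y ≤ dist p y := by
  obtain ⟨a, b, ha, hb, hab, rfl⟩ := hy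
  have key : ∀ u v : E, dist u v ^ 2
      = ‖u‖ ^ 2 - 2 * inner ℝ u v + ‖v‖ ^ 2 := by
    intro u v
    rw [dist_eq_norm, @norm_sub_sq_real]
  have hx2 : dist w x ^ 2 ≤ dist p x ^ 2 := by
    nlinarith [dist_nonneg (x := w) (y := x), dist_nonneg (x := p) (y := x)]
  have hz2 : dist w z ^ 2 ≤ dist p z ^ 2 := by
    nlinarith [dist_nonneg (x := w) (y := z), dist_nonneg (x := p) (y := z)]
  rw [key, key] at hx2 hz2
  have hy2 : dist w (a • x + b • z) ^ 2 ≤ dist p (a • x + b • z) ^ 2 := by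
    rw [key, key, inner_add_right, inner_add_right,
      real_inner_smul_right, real_inner_smul_right,
      real_inner_smul_right, real_inner_smul_right]
    nlinarith [mul_le_mul_of_nonneg_left hx2 ha, mul_le_mul_of_nonneg_left hz2 hb]
  nlinarith [dist_nonneg (x := w) (y := a • x + b • z),
    dist_nonneg (x := p) (y := a • x + b • z)]
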